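/- The function L(ε) = ε/(1−ε) + ln(1−ε) on [0,1) satisfies L(ε) = Σ_{j≥2} (1 − 1/j) ε^j, is monotonically increasing with L(0) = 0 and L(ε) → +∞ as ε → 1; moreover for α > 1 and ε√α < 1, L^{-1}(α L(ε)) ≤ √α · ε. -/

import Mathlib

open Real Filter

lemma L_hasSum {e : ℝ} (h0 : 0 ≤ e) (h1 : e < 1) :
    HasSum (fun j : ℕ => (1 - 1 / ((j : ℝ) + 2)) * e ^ (j + 2))
      (e / (1 - e) + Real.log (1 - e)) := by
  have habs : |e| < 1 := by rw [abs_of_nonneg h0]; exact h1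
  have hg : HasSum (fun n : ℕ => e ^ (n + 1)) (e / (1 - e)) := by
    have := (hasSum_geometric_of_lt_one h0 h1).mul_left e
    simpa [pow_succ', div_eq_mul_inv] using this
  have hl := Real.hasSum_pow_div_log_of_abs_lt_one habs
  have hsum : HasSum (fun n : ℕ => (1 - 1 / ((n : ℝ) + 1)) * e ^ (n + 1))
      (e / (1 - e) + Real.log (1 - e)) := by
    have h2 := hg.sub hl
    rw [sub_neg_eq_add] at h2
    convert h2 using 2 with n
    case e'_5 => ring
    rfl
  have h2 := (hasSum_nat_add_iff' (f := fun n : ℕ => (1 - 1 / ((n : ℝ) + 1)) * e ^ (n + 1)) 1).mpr hsum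
  simp only [Finset.range_one, Finset.sum_singleton] at h2
  norm_num at h2
  convert h2 using 2 with n
  case e'_5 => ring
  rfl

lemma L_strictMono : StrictMonoOn (fun e : ℝ => e / (1 - e) + Real.log (1 - e)) (Set.Ico 0 1) := by
  have hderiv : ∀ x ∈ Set.Ioo (0:ℝ) 1,
      HasDerivAt (fun e : ℝ => e / (1 - e) + Real.log (1 - e)) (x / (1 - x) ^ 2) x := by
    intro x hx
    have hne : (1 : ℝ) - x ≠ 0 := by nlinarith [hx.2]
    have h1 : HasDerivAt (fun e : ℝ => e / (1 - e))
        ((1 * (1 - x) - x * (0 - 1)) / (1 - x) ^ 2) x :=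
      (hasDerivAt_id x).div ((hasDerivAt_const x (1:ℝ)).sub (hasDerivAt_id x)) hne
    have h2 : HasDerivAt (fun e : ℝ => Real.log (1 - e)) ((0 - 1) / (1 - x)) x :=
      ((hasDerivAt_const x (1:ℝ)).sub (hasDerivAt_id x)).log hne
    have := h1.add h2
    convert this using 1
    case e'_9 =>
      field_simp
      ring
    all_goals rfl
  have hc : ContinuousOn (fun e : ℝ => e / (1 - e) + Real.log (1 - e)) (Set.Ico 0 1) := by
    intro x hx
    have hne : (1 : ℝ) - x ≠ 0 := by nlinarith [hx.2]
    exact (((continuousAt_id.div (continuousAt_const.sub continuousAt_id) hne).add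
      ((Real.continuousAt_log hne).comp (continuousAt_const.sub continuousAt_id)))).continuousWithinAt
  have := strictMonoOn_of_deriv_pos (convex_Ico (0:ℝ) 1) hc ?_
  · exact this
  · intro x hx
    rw [interior_Ico] at hx
    rw [(hderiv x hx).deriv]
    have h1 : (0:ℝ) < 1 - x := by linarith [hx.2]
    exact div_pos hx.1 (pow_pos h1 2)

lemma L_tendsto : Filter.Tendsto (fun e : ℝ => e / (1 - e) + Real.log (1 - e))
    (nhdsWithin 1 (Set.Iio 1)) Filter.atTop := by
  have hsub : Tendsto (fun e : ℝ => 1 - e) (nhdsWithin 1 (Set.Iio 1)) (nhdsWithin 0 (Set.Ioi 0)) := by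
    apply tendsto_nhdsWithin_of_tendsto_nhds_of_eventually_within
    · have : Tendsto (fun e : ℝ => 1 - e) (nhds 1) (nhds (1 - 1)) :=
        (continuous_const.sub continuous_id).tendsto 1
      simpa using this.mono_left nhdsWithin_le_nhds
    · filter_upwards [eventually_mem_nhdsWithin] with x hx
      simpa using (sub_pos.mpr (Set.mem_Iio.mp hx))
  have hinv : Tendsto (fun e : ℝ => (1 - e)⁻¹) (nhdsWithin 1 (Set.Iio 1)) atTop :=
    tendsto_inv_nhdsGT_zero.comp hsub
  have hh : Tendsto (fun x : ℝ => x - Real.log x) atTop atTop := by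
    refine tendsto_atTop_mono' atTop ?_ (tendsto_id.atTop_div_const two_pos)
    filter_upwards [Real.isLittleO_log_id_atTop.bound (by norm_num : (0:ℝ) < 1/2),
      eventually_ge_atTop (0:ℝ)] with x hb hx
    simp only [Real.norm_eq_abs, id] at hb ⊢
    rw [abs_of_nonneg hx] at hb
    have := (abs_le.mp hb).2
    linarith
  have h2 : Tendsto (fun e : ℝ => (1 - e)⁻¹ - Real.log ((1 - e)⁻¹)) (nhdsWithin 1 (Set.Iio 1)) atTop :=
    hh.comp hinv
  have h3 : Tendsto (fun e : ℝ => (1 - e)⁻¹ - Real.log ((1 - e)⁻¹) - 1)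
      (nhdsWithin 1 (Set.Iio 1)) atTop := tendsto_atTop_add_const_right _ (-1) h2
  apply h3.congr'
  filter_upwards [eventually_mem_nhdsWithin] with x (hx : x < 1)
  have hne : (1 : ℝ) - x ≠ 0 := by linarith
  rw [Real.log_inv]
  field_simp
  ring

lemma L_inv_bound (α e δ : ℝ) (hα : 1 < α) (he0 : 0 ≤ e) (he1 : e < 1)
    (hlt : e * Real.sqrt α < 1) (hδ0 : 0 ≤ δ) (hδ1 : δ < 1)
    (heq : δ / (1 - δ) + Real.log (1 - δ) = α * (e / (1 - e) + Real.log (1 - e))) :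
    δ ≤ Real.sqrt α * e := by
  set s := Real.sqrt α * e with hs_def
  have hsa : 1 ≤ Real.sqrt α := by
    rw [show (1:ℝ) = Real.sqrt 1 by simp]
    exact Real.sqrt_le_sqrt hα.le
  have hs0 : 0 ≤ s := mul_nonneg (Real.sqrt_nonneg _) he0
  have hs1 : s < 1 := by rwa [hs_def, mul_comm]
  have hδsum := L_hasSum hδ0 hδ1
  have hesum := (L_hasSum he0 he1).mul_left α
  have hssum := L_hasSum hs0 hs1
  have hterm : ∀ j : ℕ, α * ((1 - 1 / ((j : ℝ) + 2)) * e ^ (j + 2)) ≤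
      (1 - 1 / ((j : ℝ) + 2)) * s ^ (j + 2) := by
    intro j
    have hc : (0:ℝ) ≤ 1 - 1 / ((j : ℝ) + 2) := by
      have h2 : (2:ℝ) ≤ (j : ℝ) + 2 := by have : (0:ℝ) ≤ (j:ℝ) := Nat.cast_nonneg j; linarith
      have : 1 / ((j : ℝ) + 2) ≤ 1 / 2 := by
        apply one_div_le_one_div_of_le <;> linarith
      linarith
    have hpow : α * e ^ (j + 2) ≤ s ^ (j + 2) := by
      rw [hs_def, mul_pow]
      apply mul_le_mul_of_nonneg_right _ (pow_nonneg he0 _)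
      calc α = Real.sqrt α ^ 2 := (Real.sq_sqrt (by linarith)).symm
        _ ≤ Real.sqrt α ^ (j + 2) := pow_le_pow_right₀ hsa (by omega)
    calc α * ((1 - 1 / ((j : ℝ) + 2)) * e ^ (j + 2))
        = (1 - 1 / ((j : ℝ) + 2)) * (α * e ^ (j + 2)) := by ring
      _ ≤ (1 - 1 / ((j : ℝ) + 2)) * s ^ (j + 2) := by
          exact mul_le_mul_of_nonneg_left hpow hc
  have hle : α * (e / (1 - e) + Real.log (1 - e)) ≤ s / (1 - s) + Real.log (1 - s) :=
    hasSum_le hterm hesum hssum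
  by_contra hcon
  push_neg at hcon
  have := L_strictMono ⟨hs0, hs1⟩ ⟨hδ0, hδ1⟩ hcon
  simp only at this
  rw [heq] at this
  linarith

theorem L_function_properties :
    (∀ e : ℝ, 0 ≤ e → e < 1 →
      e / (1 - e) + Real.log (1 - e) =
        ∑' j : ℕ, (1 - 1 / ((j : ℝ) + 2)) * e ^ (j + 2)) ∧
    StrictMonoOn (fun e : ℝ => e / (1 - e) + Real.log (1 - e)) (Set.Ico 0 1) ∧
    ((0 : ℝ) / (1 - 0) + Real.log (1 - 0) = 0) ∧
    Filter.Tendsto (fun e : ℝ => e / (1 - e) + Real.log (1 - e))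
      (nhdsWithin 1 (Set.Iio 1)) Filter.atTop ∧
    (∀ α e δ : ℝ, 1 < α → 0 ≤ e → e < 1 → e * Real.sqrt α < 1 →
      0 ≤ δ → δ < 1 →
      δ / (1 - δ) + Real.log (1 - δ) = α * (e / (1 - e) + Real.log (1 - e)) →
      δ ≤ Real.sqrt α * e) := by
  exact ⟨fun e h0 h1 => (L_hasSum h0 h1).tsum_eq.symm, L_strictMono, by norm_num,
    L_tendsto, fun α e δ h1 h2 h3 h4 h5 h6 h7 => L_inv_bound α e δ h1 h2 h3 h4 h5 h6 h7⟩
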